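/- With N(s,t) as defined recursively, N(s,t) ≥ ( ((s-1)/2 + t - 2)^{(s-1)/2 + t - 2} / ( ((s-1)/2)^{(s-1)/2} · (t-2)^{t-2} ) )^{-s} for s ≥ 2, t ≥ 3. -/

import Mathlib

/-- The function `N(s,t)`: `N(s,t) = 1` if `s ≤ 1` or `t ≤ 2`, and otherwise
`N(s,t) = min_{x ∈ [0,1]} max (x^s N(s,t-1)) ((1-x)^{s-1} N(s-1,t))`
(the minimum written as an infimum, which is attained by continuity). -/
noncomputable def N : ℕ → ℕ → ℝ
  | 0, _ => 1
  | 1, _ => 1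
  | _ + 2, 0 => 1
  | _ + 2, 1 => 1
  | _ + 2, 2 => 1
  | s + 2, t + 3 => sInf {y : ℝ | ∃ x ∈ Set.Icc (0 : ℝ) 1,
      y = max (x ^ (s + 2) * N (s + 2) (t + 2)) ((1 - x) ^ (s + 1) * N (s + 1) (t + 3))}
  termination_by s t => (s, t)

lemma key : ∀ (s t : ℕ) (y : ℝ), y ∈ Set.Icc (0:ℝ) 1 →
    (1 - y) ^ (s * (s - 1) / 2) * y ^ (s * (t - 2)) ≤ N s t
  | 0, t, y, hy => by simp [N]
  | 1, t, y, hy => by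
      obtain ⟨h0, h1⟩ := hy
      simpa [N] using pow_le_one₀ h0 h1
  | s + 2, 0, y, hy => by
      obtain ⟨h0, h1⟩ := hy
      simpa [N] using pow_le_one₀ (by linarith) (by linarith)
  | s + 2, 1, y, hy => by
      obtain ⟨h0, h1⟩ := hy
      simpa [N] using pow_le_one₀ (by linarith) (by linarith)
  | s + 2, 2, y, hy => by
      obtain ⟨h0, h1⟩ := hy
      simpa [N] using pow_le_one₀ (by linarith) (by linarith)
  | s + 2, t + 3, y, hy => by
      obtain ⟨h0, h1⟩ := hy
      have hs1 : s + 2 - 1 = s + 1 := rfl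
      have hs2 : s + 1 - 1 = s := rfl
      have ht1 : t + 3 - 2 = t + 1 := rfl
      have ht2 : t + 2 - 2 = t := rfl
      rw [N]
      apply le_csInf
      · exact ⟨_, 0, ⟨le_refl _, zero_le_one⟩, rfl⟩
      rintro z ⟨x, ⟨hx0, hx1⟩, rfl⟩
      have hy1 : (0:ℝ) ≤ 1 - y := by linarith
      obtain ⟨k, hk⟩ := Nat.even_mul_succ_self s
      have e1 : (s + 2) * (s + 2 - 1) / 2 = (s + 1) + (s + 1) * (s + 1 - 1) / 2 := by
        have h1 : (s + 2) * (s + 2 - 1) = k + k + 2 * (s + 1) := by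
          rw [hs1]; rw [show (s+2)*(s+1) = s*(s+1) + 2*(s+1) from by ring, hk]
        have h2 : (s + 1) * (s + 1 - 1) = k + k := by
          rw [hs2, mul_comm]; exact hk
        omega
      have e2 : (s + 2) * (t + 3 - 2) = (s + 2) + (s + 2) * (t + 2 - 2) := by
        rw [ht1, ht2]; ring
      rcases le_total y x with hyx | hxy
      · refine le_trans ?_ (le_max_left _ _)
        have ih := key (s + 2) (t + 2) y ⟨h0, h1⟩
        have hN : (0:ℝ) ≤ N (s + 2) (t + 2) := le_trans (by positivity) ih
        calc (1 - y) ^ ((s+2) * (s+2-1) / 2) * y ^ ((s+2) * (t+3-2))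
            = y ^ (s+2) * ((1 - y) ^ ((s+2) * (s+2-1) / 2) * y ^ ((s+2) * (t+2-2))) := by
              rw [e2, pow_add]; ring
          _ ≤ y ^ (s+2) * N (s + 2) (t + 2) :=
              mul_le_mul_of_nonneg_left ih (by positivity)
          _ ≤ x ^ (s+2) * N (s + 2) (t + 2) :=
              mul_le_mul_of_nonneg_right (pow_le_pow_left₀ h0 hyx _) hN
      · refine le_trans ?_ (le_max_right _ _)
        have ih := key (s + 1) (t + 3) y ⟨h0, h1⟩
        have step1 : y ^ ((s+2) * (t+3-2)) ≤ y ^ ((s+1) * (t+3-2)) :=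
          pow_le_pow_of_le_one h0 h1 (Nat.mul_le_mul_right _ (by omega))
        calc (1 - y) ^ ((s+2) * (s+2-1) / 2) * y ^ ((s+2) * (t+3-2))
            = (1 - y) ^ (s+1) * ((1 - y) ^ ((s+1) * (s+1-1) / 2) * y ^ ((s+2) * (t+3-2))) := by
              rw [e1, pow_add]; ring
          _ ≤ (1 - y) ^ (s+1) * ((1 - y) ^ ((s+1) * (s+1-1) / 2) * y ^ ((s+1) * (t+3-2))) :=
              mul_le_mul_of_nonneg_left (mul_le_mul_of_nonneg_left step1 (by positivity)) (by positivity)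
          _ ≤ (1 - y) ^ (s+1) * N (s + 1) (t + 3) :=
              mul_le_mul_of_nonneg_left ih (by positivity)
          _ ≤ (1 - x) ^ (s+1) * N (s + 1) (t + 3) :=
              mul_le_mul_of_nonneg_right (pow_le_pow_left₀ hy1 (by linarith) _)
                (le_trans (by positivity) ih)
  termination_by s t => (s, t)

/-- For `s ≥ 2`, `t ≥ 3`,
`N(s,t) ≥ ( ((s-1)/2 + t-2)^{(s-1)/2 + t-2} / ( ((s-1)/2)^{(s-1)/2} (t-2)^{t-2} ) )^{-s}`,
with real exponents (`rpow`, convention `0^0 = 1`). -/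
theorem stmt_10 (s t : ℕ) (hs : 2 ≤ s) (ht : 3 ≤ t) :
    ((((s : ℝ) - 1) / 2 + (t : ℝ) - 2) ^ (((s : ℝ) - 1) / 2 + (t : ℝ) - 2) /
        ((((s : ℝ) - 1) / 2) ^ (((s : ℝ) - 1) / 2) * ((t : ℝ) - 2) ^ ((t : ℝ) - 2)))
      ^ (-(s : ℝ)) ≤ N s t := by
  set a : ℝ := ((s : ℝ) - 1) / 2 with ha_def
  set b : ℝ := (t : ℝ) - 2 with hb_def
  have hs' : (2:ℝ) ≤ (s:ℝ) := by exact_mod_cast hs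
  have ht' : (3:ℝ) ≤ (t:ℝ) := by exact_mod_cast ht
  have ha : 0 < a := by rw [ha_def]; linarith
  have hb : 0 < b := by rw [hb_def]; linarith
  have hm : 0 < a + b := by linarith
  have hgoal : a + (t:ℝ) - 2 = a + b := by rw [hb_def]; ring
  rw [hgoal]
  set y : ℝ := b / (a + b) with hy_def
  have hy0 : 0 ≤ y := by positivity
  have hy1 : y ≤ 1 := by rw [hy_def, div_le_one hm]; linarith
  have h1y : 1 - y = a / (a + b) := by rw [hy_def]; field_simp; ring
  have hX : (0:ℝ) < (a + b) ^ (a + b) / (a ^ a * b ^ b) := by positivity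
  have lhs_eq : ((a + b) ^ (a + b) / (a ^ a * b ^ b)) ^ (-(s : ℝ))
      = (a / (a + b)) ^ (a * s) * (b / (a + b)) ^ (b * s) := by
    rw [Real.rpow_neg hX.le, ← Real.inv_rpow hX.le]
    have hinv : ((a + b) ^ (a + b) / (a ^ a * b ^ b))⁻¹
        = (a / (a + b)) ^ a * (b / (a + b)) ^ b := by
      rw [Real.div_rpow ha.le hm.le, Real.div_rpow hb.le hm.le,
        Real.rpow_add hm]
      field_simp
    rw [hinv, Real.mul_rpow (by positivity) (by positivity),
      ← Real.rpow_mul (by positivity : (0:ℝ) ≤ a / (a+b)),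
      ← Real.rpow_mul (by positivity : (0:ℝ) ≤ b / (a+b))]
  rw [lhs_eq]
  obtain ⟨r, hr⟩ : ∃ r, s = r + 2 := ⟨s - 2, by omega⟩
  have hev : s * (s - 1) / 2 * 2 = s * (s - 1) := by
    apply Nat.div_mul_cancel
    obtain ⟨k, hk⟩ := Nat.even_mul_succ_self (r + 1)
    refine ⟨k, ?_⟩
    rw [hr]
    show (r + 2) * (r + 2 - 1) = 2 * k
    have : (r + 2) * (r + 2 - 1) = (r + 1) * (r + 1 + 1) := by
      simp [Nat.add_sub_cancel]; ring
    omega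
  have ea : a * s = ((s * (s - 1) / 2 : ℕ) : ℝ) := by
    have h2 : ((s * (s - 1) / 2 : ℕ) : ℝ) * 2 = (s:ℝ) * ((s:ℝ) - 1) := by
      rw [show ((2:ℝ)) = ((2:ℕ):ℝ) from by norm_num, ← Nat.cast_mul, hev,
        Nat.cast_mul, Nat.cast_sub (by omega : 1 ≤ s)]
      push_cast; ring
    rw [ha_def]; linarith
  have eb : b * s = ((s * (t - 2) : ℕ) : ℝ) := by
    rw [hb_def]
    push_cast [Nat.cast_sub (by omega : 2 ≤ t)]
    ring
  rw [ea, eb, Real.rpow_natCast, Real.rpow_natCast, ← h1y]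
  exact key s t y ⟨hy0, hy1⟩
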